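/- For all integers k ≥ 2 and m ≥ 2, the sum over all strictly increasing sequences 1 = i_1 < i_2 < ... < i_k < m of the product ∏_{j=1}^{k-1} (i_{j+1} - i_j) equals the binomial coefficient C(m+k-3, 2k-2). -/

import Mathlib

open Finset

lemma hockey (r N : ℕ) : ∑ j ∈ range (N+1), j.choose r = (N+1).choose (r+1) := by
  induction N with
  | zero =>
    cases r with
    | zero => simp
    | succ r' => simp [Nat.choose_eq_zero_of_lt (by omega : 0 < r'+1),
        Nat.choose_eq_zero_of_lt (by omega : 1 < r'+1+1)]
  | succ N ih =>
    rw [Finset.sum_range_succ, ih, Nat.choose_succ_succ (N+1) r]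
    simp only [Nat.succ_eq_add_one]
    omega

lemma conv (r s N : ℕ) :
    ∑ j ∈ range (N+1), j.choose r * (N-j).choose s = (N+1).choose (r+s+1) := by
  induction N generalizing s with
  | zero =>
    simp only [range_one, sum_singleton, Nat.zero_sub]
    rcases Nat.eq_zero_or_pos r with hr | hr
    · rcases Nat.eq_zero_or_pos s with hs | hs
      · simp [hr, hs]
      · subst hr
        rw [Nat.choose_eq_zero_of_lt (by omega : (1:ℕ) < 0+s+1)]
        simp [Nat.choose_eq_zero_of_lt hs]
    · rw [Nat.choose_eq_zero_of_lt (by omega : (1:ℕ) < r+s+1)]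
      simp [Nat.choose_eq_zero_of_lt hr]
  | succ N ih =>
    cases s with
    | zero =>
      simp only [Nat.choose_zero_right, mul_one]
      exact hockey r (N+1)
    | succ s' =>
      rw [Finset.sum_range_succ]
      have h1 : ∀ j ∈ range (N+1),
          j.choose r * (N+1-j).choose (s'+1)
            = j.choose r * (N-j).choose s' + j.choose r * (N-j).choose (s'+1) := by
        intro j hj
        rw [mem_range] at hj
        have h2 : N + 1 - j = (N - j) + 1 := by omega
        rw [h2, Nat.choose_succ_succ, Nat.mul_add]
      rw [Finset.sum_congr rfl h1, Finset.sum_add_distrib, ih (s'+1), ih s']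
      rw [Nat.sub_self, Nat.choose_eq_zero_of_lt (by omega : 0 < s'+1), Nat.mul_zero,
        Nat.add_zero]
      have h3 : r + (s'+1) + 1 = (r + s' + 1) + 1 := by ring
      rw [h3, Nat.choose_succ_succ (N+1) (r+s'+1)]

lemma step_num (k m : ℕ) (hk : 1 ≤ k) (hm : 2 ≤ m) :
    ∑ i ∈ Ico 2 m, (i-1) * ((m-i+1)+k-3).choose (2*k-2)
      = (m+(k+1)-3).choose (2*(k+1)-2) := by
  have e0 : m+(k+1)-3 = (m+k-3)+1 := by omega
  have e1 : 2*(k+1)-2 = 1+(2*k-2)+1 := by omega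
  rw [e0, e1, ← conv 1 (2*k-2) (m+k-3)]
  have e2 : m+k-3+1 = m+k-2 := by omega
  rw [e2]
  -- restrict RHS to Ico 1 (m-1)
  have hsub : Ico 1 (m-1) ⊆ range (m+k-2) := by
    intro j hj; rw [mem_Ico] at hj; rw [mem_range]; omega
  have hzero : ∀ j ∈ range (m+k-2), j ∉ Ico 1 (m-1) →
      j.choose 1 * (m+k-3-j).choose (2*k-2) = 0 := by
    intro j hj hnot
    rw [mem_range] at hj
    rw [mem_Ico] at hnot
    push_neg at hnot
    rcases Nat.eq_zero_or_pos j with h0 | h0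
    · simp [h0]
    · have hj2 : m - 1 ≤ j := hnot h0
      have hk2 : 2 ≤ k := by omega
      rw [Nat.choose_eq_zero_of_lt (by omega : m+k-3-j < 2*k-2), Nat.mul_zero]
  rw [← Finset.sum_subset hsub hzero]
  rw [Finset.sum_Ico_eq_sum_range, Finset.sum_Ico_eq_sum_range]
  have e3 : m - 2 = m - 1 - 1 := by omega
  rw [← e3]
  apply Finset.sum_congr rfl
  intro j hj
  rw [mem_range] at hj
  have e4 : 2+j-1 = (1+j).choose 1 := by rw [Nat.choose_one_right]; omega
  have e5 : (m-(2+j)+1)+k-3 = m+k-3-(1+j) := by omega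
  rw [e4, e5]

def addEmb (c : ℕ) : ℕ ↪ ℕ := ⟨fun x => x + c, add_left_injective c⟩

lemma sort_map_add (c : ℕ) (s : Finset ℕ) :
    (s.map (addEmb c)).sort (· ≤ ·) = (s.sort (· ≤ ·)).map (· + c) := by
  have hperm : List.Perm ((s.map (addEmb c)).sort (· ≤ ·)) ((s.sort (· ≤ ·)).map (· + c)) := by
    apply Multiset.coe_eq_coe.mp
    rw [Finset.sort_eq, Finset.map_val, ← Finset.sort_eq s (· ≤ ·), ← Multiset.map_coe]
    rfl
  have hs2 : ((s.sort (· ≤ ·)).map (· + c)).Pairwise (· ≤ ·) :=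
    List.Pairwise.map _ (fun a b h => by simpa using Nat.add_le_add_right h c)
      (Finset.pairwise_sort _ _)
  exact hperm.eq_of_pairwise' (Finset.pairwise_sort _ _) hs2

def P (s : Finset ℕ) (n : ℕ) : ℕ :=
  ∏ j ∈ Finset.range n,
    ((s.sort (· ≤ ·)).getD (j + 1) 0 - (s.sort (· ≤ ·)).getD j 0)

lemma P_map_add (c : ℕ) (u : Finset ℕ) (n : ℕ) : P (u.map (addEmb c)) n = P u n := by
  unfold P
  apply Finset.prod_congr rfl
  intro j _
  rw [sort_map_add]
  set l := u.sort (· ≤ ·) with hl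
  rcases Nat.lt_or_ge (j+1) l.length with h | h
  · have h1 : j < l.length := by omega
    simp only [List.getD_eq_getElem?_getD, List.getElem?_map,
      List.getElem?_eq_getElem h, List.getElem?_eq_getElem h1, Option.map_some,
      Option.getD_some]
    omega
  · have h2 : (l.map (· + c)).length ≤ j + 1 := by simpa using h
    rw [List.getD_eq_default l 0 h, List.getD_eq_default _ 0 h2]
    simp [Nat.zero_sub]

lemma sort_getD_zero_mem {t : Finset ℕ} (ht : t.Nonempty) :
    (t.sort (· ≤ ·)).getD 0 0 ∈ t := by
  have hlen : 0 < (t.sort (· ≤ ·)).length := by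
    rw [Finset.length_sort]; exact card_pos.mpr ht
  rw [List.getD_eq_getElem _ _ hlen]
  exact (Finset.mem_sort _).mp (List.getElem_mem hlen)

lemma sort_getD_zero_le {t : Finset ℕ} (ht : t.Nonempty) {b : ℕ} (hb : b ∈ t) :
    (t.sort (· ≤ ·)).getD 0 0 ≤ b := by
  have hlen : 0 < (t.sort (· ≤ ·)).length := by
    rw [Finset.length_sort]; exact card_pos.mpr ht
  rw [List.getD_eq_getElem _ _ hlen]
  have := Finset.sorted_zero_eq_min' (s := t) (h := hlen)
  rw [this]
  exact Finset.min'_le t b hb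

lemma P_insert (a : ℕ) (t : Finset ℕ) (h : ∀ b ∈ t, a < b) (n : ℕ) :
    P (insert a t) (n+1) = ((t.sort (· ≤ ·)).getD 0 0 - a) * P t n := by
  have hna : a ∉ t := fun hx => lt_irrefl a (h a hx)
  rw [P, Finset.sort_insert (r := (· ≤ ·)) (fun b hb => le_of_lt (h b hb)) hna,
    Finset.prod_range_succ']
  simp only [List.getD_cons_succ, List.getD_cons_zero]
  rw [mul_comm, P]

def F (k m : ℕ) : ℕ :=
  ∑ s ∈ ((Finset.Ico 1 m).powersetCard k).filter (fun s => 1 ∈ s), P s (k - 1)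

lemma shift (k i m : ℕ) (hi : 2 ≤ i) (him : i < m) :
    ∑ t ∈ ((Ico i m).powersetCard k).filter (fun t => i ∈ t), P t (k-1)
      = F k (m - i + 1) := by
  rw [F]
  symm
  apply Finset.sum_nbij' (fun u => u.map (addEmb (i-1)))
    (fun t => t.image (fun x => x - (i-1)))
  · intro u hu
    rw [mem_filter, mem_powersetCard] at hu ⊢
    obtain ⟨⟨hsub, hcard⟩, hmem⟩ := hu
    refine ⟨⟨?_, by rw [Finset.card_map]; exact hcard⟩, ?_⟩
    · intro x hx
      rw [Finset.mem_map] at hx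
      obtain ⟨y, hy, rfl⟩ := hx
      have := hsub hy
      rw [mem_Ico] at this ⊢
      simp only [addEmb, Function.Embedding.coeFn_mk]
      omega
    · rw [Finset.mem_map]
      exact ⟨1, hmem, by simp [addEmb]; omega⟩
  · intro t ht
    rw [mem_filter, mem_powersetCard] at ht ⊢
    obtain ⟨⟨hsub, hcard⟩, hmem⟩ := ht
    have hinj : Set.InjOn (fun x => x - (i-1)) t := by
      intro x hx y hy hxy
      have hx' := hsub hx; have hy' := hsub hy
      rw [mem_Ico] at hx' hy'
      simp only at hxy
      omega
    refine ⟨⟨?_, by rw [Finset.card_image_of_injOn hinj]; exact hcard⟩, ?_⟩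
    · intro x hx
      rw [Finset.mem_image] at hx
      obtain ⟨y, hy, rfl⟩ := hx
      have := hsub hy
      rw [mem_Ico] at this ⊢
      omega
    · rw [Finset.mem_image]
      exact ⟨i, hmem, by omega⟩
  · intro u hu
    rw [Finset.map_eq_image, Finset.image_image]
    have he : ∀ x ∈ u, ((fun x => x - (i-1)) ∘ (addEmb (i-1))) x = id x := by
      intro x hx; simp [addEmb]
    rw [Finset.image_congr he, Finset.image_id]
  · intro t ht
    rw [mem_filter, mem_powersetCard] at ht
    obtain ⟨⟨hsub, hcard⟩, hmem⟩ := ht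
    rw [Finset.map_eq_image, Finset.image_image]
    have he : ∀ x ∈ t, ((addEmb (i-1)) ∘ fun x => x - (i-1)) x = id x := by
      intro x hx
      have := hsub hx
      rw [mem_Ico] at this
      simp only [Function.comp_apply, addEmb, Function.Embedding.coeFn_mk, id]
      omega
    rw [Finset.image_congr he, Finset.image_id]
  · intro u hu
    exact (P_map_add (i-1) u (k-1)).symm

lemma F_rec (k m : ℕ) (hk : 1 ≤ k) (hm : 2 ≤ m) :
    F (k+1) m = ∑ i ∈ Ico 2 m, (i-1) * F k (m-i+1) := by
  have stepA : F (k+1) m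
      = ∑ t ∈ (Ico 2 m).powersetCard k,
          ((t.sort (· ≤ ·)).getD 0 0 - 1) * P t (k-1) := by
    rw [F]
    apply Finset.sum_nbij' (fun s => s.erase 1) (fun t => insert 1 t)
    · intro s hs
      rw [mem_filter, mem_powersetCard] at hs
      rw [mem_powersetCard]
      obtain ⟨⟨hs1, hs2⟩, hs3⟩ := hs
      constructor
      · intro x hx
        rw [Finset.mem_erase] at hx
        have := hs1 hx.2
        rw [mem_Ico] at this ⊢
        have := hx.1
        omega
      · rw [Finset.card_erase_of_mem hs3, hs2]
        omega
    · intro t ht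
      rw [mem_powersetCard] at ht
      rw [mem_filter, mem_powersetCard]
      have h1 : 1 ∉ t := by
        intro h
        have := ht.1 h
        rw [mem_Ico] at this
        omega
      refine ⟨⟨?_, ?_⟩, Finset.mem_insert_self 1 t⟩
      · intro x hx
        rcases Finset.mem_insert.mp hx with rfl | hx
        · rw [mem_Ico]; omega
        · have := ht.1 hx
          rw [mem_Ico] at this ⊢
          omega
      · rw [Finset.card_insert_of_notMem h1, ht.2]
    · intro s hs
      exact Finset.insert_erase (mem_filter.mp hs).2
    · intro t ht
      apply Finset.erase_insert
      intro h
      rw [mem_powersetCard] at ht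
      have := ht.1 h
      rw [mem_Ico] at this
      omega
    · intro s hs
      rw [mem_filter, mem_powersetCard] at hs
      obtain ⟨⟨hs1, hs2⟩, hs3⟩ := hs
      have hk' : (k+1)-1 = (k-1)+1 := by omega
      rw [hk']
      have hlt : ∀ b ∈ s.erase 1, 1 < b := by
        intro b hb
        rw [Finset.mem_erase] at hb
        have := hs1 hb.2
        rw [mem_Ico] at this
        have := hb.1
        omega
      conv_lhs => rw [← Finset.insert_erase hs3]
      exact P_insert 1 _ hlt (k-1)
  have hmap : ∀ t ∈ (Ico 2 m).powersetCard k,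
      (t.sort (· ≤ ·)).getD 0 0 ∈ Ico 2 m := by
    intro t ht
    rw [mem_powersetCard] at ht
    have hne : t.Nonempty := Finset.card_pos.mp (by rw [ht.2]; omega)
    exact ht.1 (sort_getD_zero_mem hne)
  rw [stepA, ← Finset.sum_fiberwise_of_maps_to hmap
    (fun t => ((t.sort (· ≤ ·)).getD 0 0 - 1) * P t (k-1))]
  apply Finset.sum_congr rfl
  intro i hi
  rw [mem_Ico] at hi
  have hset : (((Ico 2 m).powersetCard k).filter
        (fun t => (t.sort (· ≤ ·)).getD 0 0 = i))
      = ((Ico i m).powersetCard k).filter (fun t => i ∈ t) := by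
    ext t
    rw [mem_filter, mem_filter, mem_powersetCard, mem_powersetCard]
    constructor
    · rintro ⟨⟨hsub, hcard⟩, hmin⟩
      have hne : t.Nonempty := Finset.card_pos.mp (by rw [hcard]; omega)
      have hmem : i ∈ t := hmin ▸ sort_getD_zero_mem hne
      refine ⟨⟨?_, hcard⟩, hmem⟩
      intro x hx
      have h1 := hsub hx
      rw [mem_Ico] at h1 ⊢
      have h2 := sort_getD_zero_le hne hx
      rw [hmin] at h2
      exact ⟨h2, h1.2⟩
    · rintro ⟨⟨hsub, hcard⟩, hmem⟩
      have hne : t.Nonempty := ⟨i, hmem⟩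
      refine ⟨⟨?_, hcard⟩, ?_⟩
      · intro x hx
        have := hsub hx
        rw [mem_Ico] at this ⊢
        omega
      · apply le_antisymm (sort_getD_zero_le hne hmem)
        have := hsub (sort_getD_zero_mem hne)
        rw [mem_Ico] at this
        exact this.1
  rw [Finset.sum_congr rfl (fun t ht => by rw [(mem_filter.mp ht).2]), hset,
    ← Finset.mul_sum, shift k i m hi.1 hi.2]

lemma F_eq (k : ℕ) (hk : 1 ≤ k) : ∀ m, 2 ≤ m → F k m = (m+k-3).choose (2*k-2) := by
  induction k with
  | zero => omega
  | succ k ih =>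
    intro m hm
    rcases Nat.eq_zero_or_pos k with rfl | hk1
    · -- k = 1 base case
      have hone : ((Finset.Ico 1 m).powersetCard 1).filter (fun s => 1 ∈ s) = {{1}} := by
        ext s
        rw [mem_filter, mem_powersetCard, Finset.mem_singleton]
        constructor
        · rintro ⟨⟨hsub, hcard⟩, hmem⟩
          obtain ⟨a, rfl⟩ := Finset.card_eq_one.mp hcard
          rw [Finset.mem_singleton] at hmem
          rw [hmem]
        · rintro rfl
          refine ⟨⟨?_, Finset.card_singleton 1⟩, Finset.mem_singleton_self 1⟩
          intro x hx
          rw [Finset.mem_singleton] at hx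
          rw [hx, mem_Ico]
          omega
      rw [F, hone, Finset.sum_singleton]
      simp [P]
    · rw [F_rec k m hk1 hm]
      have hcongr : ∀ i ∈ Ico 2 m,
          (i-1) * F k (m-i+1) = (i-1) * ((m-i+1)+k-3).choose (2*k-2) := by
        intro i hi
        rw [mem_Ico] at hi
        rw [ih hk1 (m-i+1) (by omega)]
      rw [Finset.sum_congr rfl hcongr]
      exact step_num k m hk1 hm

/-- For `k ≥ 2`, `m ≥ 2`, the sum over all strictly increasing sequences
`1 = i₁ < i₂ < ⋯ < i_k < m` of `∏_{j=1}^{k-1} (i_{j+1} - i_j)` equals `C(m+k-3, 2k-2)`.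
The sum ranges over `k`-element subsets of `{1, …, m-1}` containing `1`. -/
theorem sum_prod_diff_left_closed (k m : ℕ) (hk : 2 ≤ k) (hm : 2 ≤ m) :
    ∑ s ∈ ((Finset.Ico 1 m).powersetCard k).filter (fun s => 1 ∈ s),
      ∏ j ∈ Finset.range (k - 1),
        ((s.sort (· ≤ ·)).getD (j + 1) 0 - (s.sort (· ≤ ·)).getD j 0) =
      Nat.choose (m + k - 3) (2 * k - 2) := by
  exact F_eq k (by omega) m hm
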